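/- arXiv:1705.04525 — 4 statements merged into one kernel-verified Lean document; each statement's English description precedes it below -/
import Mathlib

section
/- Let V ⊆ ℝⁿ be a Zariski closed set and X ⊆ V a subset. Suppose f : X → ℝ is such that for each point x ∈ X there exist a Zariski open neighborhood U_x ⊆ ℝⁿ of x and two polynomial functions P_x, Q_x : ℝⁿ → ℝ with U_x ⊆ ℝⁿ \ Z(Q_x) and f = P_x / Q_x on X ∩ U_x. Then there exist two polynomial functions P, Q : ℝⁿ → ℝ such that X ⊆ ℝⁿ \ Z(Q) and f = P/Q on X. -/
open MvPolynomial

/-- Lemma 2.2 (d) ⟹ (e): local rational representations of `f` on Zariski open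
neighborhoods glue to a global representation `f = P/Q` with `Q` nonvanishing on `X`. -/
theorem stmt_0 (n : ℕ) (V X : Set (Fin n → ℝ))
    (hV : ∃ g : MvPolynomial (Fin n) ℝ, V = {x | eval x g = 0})
    (hXV : X ⊆ V) (f : (Fin n → ℝ) → ℝ)
    (hloc : ∀ x ∈ X, ∃ S P Q : MvPolynomial (Fin n) ℝ,
      eval x S ≠ 0 ∧
      (∀ y : Fin n → ℝ, eval y S ≠ 0 → eval y Q ≠ 0) ∧
      (∀ y ∈ X, eval y S ≠ 0 → f y = eval y P / eval y Q)) :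
    ∃ P Q : MvPolynomial (Fin n) ℝ,
      (∀ y ∈ X, eval y Q ≠ 0) ∧ (∀ y ∈ X, f y = eval y P / eval y Q) := by
  classical
  choose Sf Pf Qf hS hSQ hf using fun x : X => hloc x x.2
  set g : X → MvPolynomial (Fin n) ℝ := fun x => Sf x * Qf x with hg
  have hFG : (Ideal.span (Set.range g)).FG := IsNoetherian.noetherian _
  obtain ⟨G, hG⟩ := hFG
  -- for each generator, find a finite subset of the range spanning it
  have hmem : ∀ p ∈ G, ∃ t : Finset (MvPolynomial (Fin n) ℝ),
      ↑t ⊆ Set.range g ∧ p ∈ Ideal.span (t : Set (MvPolynomial (Fin n) ℝ)) := by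
    intro p hp
    have : p ∈ Ideal.span (Set.range g) := by
      rw [← hG]; exact Ideal.subset_span hp
    exact Submodule.mem_span_finite_of_mem_span this
  choose t ht1 ht2 using hmem
  set T : Finset (MvPolynomial (Fin n) ℝ) := G.attach.biUnion (fun p => t p.1 p.2) with hT
  have hTsub : (T : Set (MvPolynomial (Fin n) ℝ)) ⊆ Set.range g := by
    intro q hq
    simp only [hT, Finset.coe_biUnion, Set.mem_iUnion, Finset.mem_coe] at hq
    obtain ⟨p, hp, hq⟩ := hq
    exact ht1 p p.2 hq
  have hspan : Ideal.span (Set.range g) ≤ Ideal.span (T : Set (MvPolynomial (Fin n) ℝ)) := by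
    rw [← hG, Ideal.span_le]
    intro p hp
    have : p ∈ Ideal.span ((t p hp : Set (MvPolynomial (Fin n) ℝ))) :=
      ht2 p hp
    refine Ideal.span_mono ?_ this
    intro q hq
    simp only [hT, Finset.coe_biUnion, Set.mem_iUnion, Finset.mem_coe]
    exact ⟨⟨p, hp⟩, ⟨Finset.mem_attach _ _, hq⟩⟩
  -- choose preimages
  have hpre : ∀ q ∈ T, ∃ x : X, g x = q := fun q hq => hTsub hq
  choose xf hxf using hpre
  set I : Finset X := T.attach.image (fun q => xf q.1 q.2) with hI
  -- key: every y ∈ X has some x ∈ I with eval y (Sf x) ≠ 0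
  have key : ∀ y : X, ∃ x ∈ I, eval (y : Fin n → ℝ) (Sf x) ≠ 0 := by
    intro y
    by_contra hcon
    push_neg at hcon
    have hker : (T : Set (MvPolynomial (Fin n) ℝ)) ⊆ RingHom.ker (eval (y : Fin n → ℝ)) := by
      intro q hq
      have hx : xf q hq ∈ I := Finset.mem_image.2 ⟨⟨q, hq⟩, ⟨Finset.mem_attach _ _, rfl⟩⟩
      have hs := hcon _ hx
      have : eval (y : Fin n → ℝ) (g (xf q hq)) = 0 := by
        simp [hg, hs]
      rwa [hxf q hq] at this
    have hgy : g y ∈ Ideal.span (T : Set (MvPolynomial (Fin n) ℝ)) :=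
      hspan (Ideal.subset_span (Set.mem_range_self y))
    have hzero : eval (y : Fin n → ℝ) (g y) = 0 := by
      have : Ideal.span (T : Set (MvPolynomial (Fin n) ℝ)) ≤
          RingHom.ker (eval (y : Fin n → ℝ)) := Ideal.span_le.2 hker
      exact this hgy
    rw [hg] at hzero
    simp only [map_mul] at hzero
    rcases mul_eq_zero.1 hzero with h | h
    · exact hS y h
    · exact hSQ y y (hS y) h
  refine ⟨∑ x ∈ I, (Sf x) ^ 2 * Qf x * Pf x, ∑ x ∈ I, (Sf x * Qf x) ^ 2, ?_, ?_⟩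
  · intro y hy
    obtain ⟨x, hxI, hx⟩ := key ⟨y, hy⟩
    have hpos : (0:ℝ) < ∑ x ∈ I, (eval y (Sf x) * eval y (Qf x)) ^ 2 := by
      refine Finset.sum_pos' (fun i _ => sq_nonneg _) ⟨x, hxI, ?_⟩
      have hq := hSQ x y hx
      positivity
    simp only [map_sum, map_pow, map_mul]
    exact ne_of_gt hpos
  · intro y hy
    obtain ⟨x, hxI, hx⟩ := key ⟨y, hy⟩
    have hQpos : (0:ℝ) < ∑ x ∈ I, (eval y (Sf x) * eval y (Qf x)) ^ 2 := by
      refine Finset.sum_pos' (fun i _ => sq_nonneg _) ⟨x, hxI, ?_⟩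
      have hq := hSQ x y hx
      positivity
    have hP : eval y (∑ x ∈ I, (Sf x) ^ 2 * Qf x * Pf x)
        = f y * ∑ x ∈ I, (eval y (Sf x) * eval y (Qf x)) ^ 2 := by
      simp only [map_sum, map_mul, map_pow, Finset.mul_sum]
      refine Finset.sum_congr rfl (fun i _ => ?_)
      by_cases hs : eval y (Sf i) = 0
      · simp [hs]
      · have hq := hSQ i y hs
        have hfi := hf i y hy hs
        have hp : eval y (Pf i) = f y * eval y (Qf i) := by
          field_simp at hfi; linarith [hfi]
        rw [hp]; ring
    simp only [map_sum, map_mul, map_pow] at hP ⊢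
    rw [hP, mul_div_assoc, div_self (ne_of_gt hQpos), mul_one]
end

section
/- Let V be a real algebraic set in ℝᵐ and W ⊆ V a Zariski closed subset. If f : W → ℝ is a regular function, i.e. f = φ/ψ on W for regular functions φ, ψ : V → ℝ with W ∩ Z(ψ) = ∅, and α : V → ℝ is a regular function with Z(α) = W, then the function F := (φ·ψ)/(α² + ψ²) is a regular function on all of V (its denominator never vanishes on V) and F restricted to W equals f. -/
/-- Lemma 3.1 computation: if `f = φ/ψ` on `W` with `ψ` nonvanishing on `W`, and
`α` vanishes exactly on `W` (within `V`), then `α² + ψ²` vanishes nowhere on `V`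
and `F = φψ/(α² + ψ²)` restricts to `f` on `W`. -/
theorem stmt_3 (m : ℕ) (V W : Set (Fin m → ℝ)) (hWV : W ⊆ V)
    (φ ψ α : (Fin m → ℝ) → ℝ) (f : (Fin m → ℝ) → ℝ)
    (hψ : ∀ x ∈ W, ψ x ≠ 0)
    (hα : ∀ x ∈ V, (α x = 0 ↔ x ∈ W))
    (hf : ∀ x ∈ W, f x = φ x / ψ x) :
    (∀ x ∈ V, α x ^ 2 + ψ x ^ 2 ≠ 0) ∧
      (∀ x ∈ W, (φ x * ψ x) / (α x ^ 2 + ψ x ^ 2) = f x) := by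
  constructor
  · intro x hx h
    have h1 : α x = 0 ∧ ψ x = 0 := by
      constructor <;> nlinarith [sq_nonneg (α x), sq_nonneg (ψ x), sq_abs (α x), sq_abs (ψ x), pow_eq_zero_iff (n := 2) (a := α x) two_ne_zero, pow_eq_zero_iff (n := 2) (a := ψ x) two_ne_zero]
    exact hψ x ((hα x hx).mp h1.1) h1.2
  · intro x hx
    have hαx : α x = 0 := (hα x (hWV hx)).mpr hx
    have hψx := hψ x hx
    rw [hf x hx, hαx]
    field_simp
    ring
end

section
/- Let V be a Noetherian topological space and S a finite partition of V into locally closed subsets (a stratification). Then for every nonempty closed irreducible subset Z ⊆ V there exists a stratum S ∈ S such that S ∩ Z is a nonempty open dense subset of Z. -/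
/-- If `𝒮` is a finite partition of a topological space `V` into pairwise disjoint
locally closed subsets, then for every nonempty closed irreducible `Z ⊆ V` some
stratum `S ∈ 𝒮` meets `Z` in a nonempty subset that is open and dense in `Z`. -/
theorem stmt_5 {V : Type*} [TopologicalSpace V] (𝒮 : Set (Set V))
    (hfin : 𝒮.Finite) (hlc : ∀ S ∈ 𝒮, IsLocallyClosed S)
    (hdisj : 𝒮.PairwiseDisjoint id) (hcover : ⋃₀ 𝒮 = Set.univ)
    (Z : Set V) (hZc : IsClosed Z) (hZirr : IsIrreducible Z) :
    ∃ S ∈ 𝒮, (S ∩ Z).Nonempty ∧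
      (∃ U : Set V, IsOpen U ∧ S ∩ Z = Z ∩ U) ∧
      Z ⊆ closure (S ∩ Z) := by
  classical
  -- Z is covered by the closures of the pieces S ∩ Z
  set t : Finset (Set V) := hfin.toFinset.image (fun S => closure (S ∩ Z)) with ht
  have hcov : Z ⊆ ⋃₀ ↑t := by
    intro x hx
    have hxuniv : x ∈ ⋃₀ 𝒮 := by rw [hcover]; trivial
    obtain ⟨S, hS, hxS⟩ := hxuniv
    exact ⟨closure (S ∩ Z), by
      simp only [ht, Finset.coe_image, Set.mem_image, Finset.mem_coe, Set.Finite.mem_toFinset]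
      exact ⟨S, hS, rfl⟩, subset_closure ⟨hxS, hx⟩⟩
  have hclosed : ∀ z ∈ t, IsClosed z := by
    intro z hz
    simp only [ht, Finset.mem_image, Set.Finite.mem_toFinset] at hz
    obtain ⟨S, _, rfl⟩ := hz
    exact isClosed_closure
  obtain ⟨z, hzt, hZz⟩ := isIrreducible_iff_sUnion_isClosed.mp hZirr t hclosed hcov
  simp only [ht, Finset.mem_image, Set.Finite.mem_toFinset] at hzt
  obtain ⟨S, hS, rfl⟩ := hzt
  -- closure (S ∩ Z) = Z
  have hcl : closure (S ∩ Z) = Z :=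
    le_antisymm (hZc.closure_subset_iff.mpr Set.inter_subset_right) hZz
  obtain ⟨U, C, hU, hC, hUC⟩ := (hlc S hS).inter hZc.isLocallyClosed
  have hZC : Z ⊆ C := by
    rw [← hcl]
    exact (closure_mono (hUC.subset.trans Set.inter_subset_right)).trans
      (le_of_eq hC.closure_eq)
  have hkey : S ∩ Z = Z ∩ U := by
    apply le_antisymm
    · intro x hx
      exact ⟨hx.2, (hUC ▸ hx).1⟩
    · rintro x ⟨hxZ, hxU⟩
      rw [hUC]; exact ⟨hxU, hZC hxZ⟩
  refine ⟨S, hS, ?_, ⟨U, hU, hkey⟩, hZz⟩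
  rw [Set.nonempty_iff_ne_empty]
  intro h
  rw [h, closure_empty] at hcl
  exact hZirr.nonempty.ne_empty hcl.symm
end

section
/- Let Δ ⊆ ℝᵐ be a d-simplex with (d−1)-dimensional faces Δ₀,…,Δ_d, let H be the affine span of Δ and H_i the affine span of Δ_i. Suppose φ : H → ℝ is continuous with φ = 0 on D := H₀ ∪ ⋯ ∪ H_d. Then for every ε > 0 there exists a polynomial function p : H → ℝ vanishing identically on D and satisfying |φ(x) − p(x)| < ε for all x ∈ Δ. -/
open MvPolynomial

/-- Every real affine functional on `Fin m → ℝ` is given by a polynomial. -/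
lemma affine_to_poly {m : ℕ} (f : (Fin m → ℝ) →ᵃ[ℝ] ℝ) :
    ∃ P : MvPolynomial (Fin m) ℝ, ∀ x, eval x P = f x := by
  refine ⟨C (f 0) + ∑ k : Fin m, C (f.linear (fun j => if k = j then 1 else 0)) * X k,
    fun x => ?_⟩
  have h1 : f x = f.linear x + f 0 := by
    have h := congrFun f.decomp x
    simpa using h
  have h2 : f.linear x = ∑ k : Fin m, x k • f.linear (fun j => if k = j then 1 else 0) :=
    f.linear.pi_apply_eq_sum_univ x
  rw [h1, h2]
  simp only [map_add, map_sum, map_mul, eval_C, eval_X, smul_eq_mul]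
  rw [add_comm]
  congr 1
  exact Finset.sum_congr rfl fun k _ => mul_comm _ _

/-- Multivariate Stone–Weierstrass on a compact set. -/
lemma mv_poly_near {m : ℕ} {s : Set (Fin m → ℝ)} (hs : IsCompact s)
    {f : (Fin m → ℝ) → ℝ} (hf : ContinuousOn f s) {ε : ℝ} (hε : 0 < ε) :
    ∃ P : MvPolynomial (Fin m) ℝ, ∀ x ∈ s, |f x - eval x P| < ε := by
  haveI : CompactSpace s := isCompact_iff_compactSpace.mp hs
  let cm : Fin m → C(s, ℝ) := fun k =>
    ⟨fun x => (x : Fin m → ℝ) k, (continuous_apply k).comp continuous_subtype_val⟩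
  let A : Subalgebra ℝ C(s, ℝ) := (aeval cm : MvPolynomial (Fin m) ℝ →ₐ[ℝ] C(s, ℝ)).range
  have hsep : A.SeparatesPoints := by
    rintro ⟨x, hx⟩ ⟨y, hy⟩ hxy
    have hne : x ≠ y := fun h => hxy (by simp [h])
    obtain ⟨k, hk⟩ := Function.ne_iff.mp hne
    refine ⟨(cm k : s → ℝ), ⟨cm k, ⟨⟨X k, by simp [A, cm]⟩, rfl⟩⟩, ?_⟩
    simpa [cm] using hk
  have hfc : Continuous fun x : s => f x := continuousOn_iff_continuous_restrict.mp hf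
  obtain ⟨⟨g, hgA⟩, hg⟩ := ContinuousMap.exists_mem_subalgebra_near_continuous_of_separatesPoints
    A hsep (fun x : s => f x) hfc ε hε
  obtain ⟨P, rfl⟩ := hgA
  refine ⟨P, fun x hx => ?_⟩
  have h1 : ‖((aeval cm) P : C(s, ℝ)) ⟨x, hx⟩ - f x‖ < ε := hg ⟨x, hx⟩
  have h2 : ((aeval cm) P : C(s, ℝ)) ⟨x, hx⟩ = eval x P := by
    have h3 : ((aeval cm) P : C(s, ℝ)) ⟨x, hx⟩ =
        (ContinuousMap.evalAlgHom ℝ ℝ (⟨x, hx⟩ : s)) ((aeval cm) P) := rfl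
    rw [h3, comp_aeval_apply]
    rw [aeval_def, Algebra.algebraMap_self]
    rfl
  rw [h2] at h1
  calc |f x - eval x P| = ‖eval x P - f x‖ := by rw [Real.norm_eq_abs, abs_sub_comm]
  _ < ε := h1

/-- Final step in Lemma 3.7: a continuous function on the affine span `H` of a
`d`-simplex vanishing on the union `D` of the affine spans of its facets can be
approximated, uniformly on the simplex, by polynomial functions vanishing on `D`. -/
theorem stmt_6 (m d : ℕ) (v : Fin (d + 1) → (Fin m → ℝ))
    (hv : AffineIndependent ℝ v)
    (Δ : Set (Fin m → ℝ)) (hΔ : Δ = convexHull ℝ (Set.range v))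
    (H : AffineSubspace ℝ (Fin m → ℝ)) (hH : H = affineSpan ℝ (Set.range v))
    (D : Set (Fin m → ℝ))
    (hD : D = ⋃ i : Fin (d + 1),
      (affineSpan ℝ (v '' {j | j ≠ i}) : Set (Fin m → ℝ)))
    (φ : (Fin m → ℝ) → ℝ) (hφ : ContinuousOn φ (H : Set (Fin m → ℝ)))
    (hφ0 : ∀ x ∈ D, φ x = 0)
    (ε : ℝ) (hε : 0 < ε) :
    ∃ p : MvPolynomial (Fin m) ℝ,
      (∀ x ∈ D, eval x p = 0) ∧ ∀ x ∈ Δ, |φ x - eval x p| < ε := by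
  classical
  -- extend the vertices to an affine basis of the whole space
  obtain ⟨t, hst, hti, htt⟩ := exists_subset_affineIndependent_affineSpan_eq_top hv.range
  let b : AffineBasis t ℝ (Fin m → ℝ) :=
    ⟨(fun p => p : t → (Fin m → ℝ)), hti, by rwa [Subtype.range_coe]⟩
  let lam : Fin (d + 1) → ((Fin m → ℝ) →ᵃ[ℝ] ℝ) := fun i =>
    b.coord ⟨v i, hst (Set.mem_range_self i)⟩
  have hlam : ∀ i j, lam i (v j) = if i = j then 1 else 0 := by
    intro i j
    have h1 : lam i (v j) = b.coord ⟨v i, hst (Set.mem_range_self i)⟩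
        (b ⟨v j, hst (Set.mem_range_self j)⟩) := rfl
    rw [h1, AffineBasis.coord_apply]
    simp [Subtype.ext_iff, hv.injective.eq_iff, eq_comm]
  -- the coordinate of an affine combination
  have hlamcomb : ∀ (w : Fin (d + 1) → ℝ), ∑ j, w j = 1 →
      ∀ i, lam i (Finset.univ.affineCombination ℝ v w) = w i := by
    intro w hw i
    rw [Finset.map_affineCombination _ v w hw (lam i),
      Finset.univ.affineCombination_eq_linear_combination _ _ hw]
    simp [Function.comp, hlam, smul_eq_mul, mul_ite]
  -- lam i vanishes on the i-th facet span
  have hDsub : ∀ i : Fin (d + 1),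
      ∀ x ∈ (affineSpan ℝ (v '' {j | j ≠ i}) : Set (Fin m → ℝ)), lam i x = 0 := by
    intro i x hx
    have hle : affineSpan ℝ (v '' {j | j ≠ i}) ≤
        AffineSubspace.comap (lam i) (AffineSubspace.mk' (0 : ℝ) ⊥) := by
      rw [affineSpan_le]
      rintro y ⟨j, hj, rfl⟩
      simp only [SetLike.mem_coe, AffineSubspace.mem_comap,
        AffineSubspace.mem_mk']
      have hlv : lam i (v j) = 0 := by
        rw [hlam, if_neg (fun h : i = j => hj h.symm)]
      simp [hlv]
    have h : x ∈ AffineSubspace.comap (lam i) (AffineSubspace.mk' (0 : ℝ) ⊥) := hle hx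
    rw [AffineSubspace.mem_comap, AffineSubspace.mem_mk'] at h
    simpa using h
  -- an affine combination with vanishing i-th weight lies in the i-th facet span
  have hmem : ∀ (w : Fin (d + 1) → ℝ), ∑ j, w j = 1 → ∀ i, w i = 0 →
      Finset.univ.affineCombination ℝ v w ∈
        (affineSpan ℝ (v '' {j | j ≠ i}) : Set (Fin m → ℝ)) := by
    intro w hw i hwi
    have hsub : ∀ {M : Type} [AddCommMonoid M] (g : Fin (d + 1) → M),
        ∑ j : {j : Fin (d + 1) // j ≠ i}, g j = ∑ j ∈ Finset.univ.erase i, g j := by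
      intro M _ g
      rw [← Finset.filter_ne' Finset.univ i]
      exact (Finset.sum_subtype _ (fun j => by simp) g).symm
    set w' : {j : Fin (d + 1) // j ≠ i} → ℝ := fun j => w j with hw'def
    have hw' : ∑ j : {j : Fin (d + 1) // j ≠ i}, w' j = 1 := by
      rw [hsub (fun j => w j), Finset.sum_erase_eq_sub (Finset.mem_univ i), hw, hwi, sub_zero]
    have hx : Finset.univ.affineCombination ℝ v w =
        Finset.univ.affineCombination ℝ (fun j : {j : Fin (d + 1) // j ≠ i} => v j) w' := by
      calc Finset.univ.affineCombination ℝ v w = ∑ j, w j • v j :=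
            Finset.univ.affineCombination_eq_linear_combination _ _ hw
      _ = ∑ j ∈ Finset.univ.erase i, w j • v j := by
            rw [Finset.sum_erase_eq_sub (Finset.mem_univ i), hwi, zero_smul, sub_zero]
      _ = ∑ j : {j : Fin (d + 1) // j ≠ i}, w' j • v j := (hsub (fun j => w j • v j)).symm
      _ = Finset.univ.affineCombination ℝ (fun j : {j : Fin (d + 1) // j ≠ i} => v j) w' :=
            (Finset.univ.affineCombination_eq_linear_combination _ _ hw').symm
    have hrange : Set.range (fun j : {j : Fin (d + 1) // j ≠ i} => v j) = v '' {j | j ≠ i} := by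
      have : (fun j : {j : Fin (d + 1) // j ≠ i} => v j) = v ∘ Subtype.val := rfl
      rw [this, Set.range_comp, Subtype.range_coe_subtype]
    have hmem' := affineCombination_mem_affineSpan hw'
      (fun j : {j : Fin (d + 1) // j ≠ i} => v (j : Fin (d + 1)))
    rw [hrange] at hmem'
    rw [hx]
    exact hmem'
  -- polynomials realizing the coordinates
  choose Pc hPc using fun i => affine_to_poly (lam i)
  set q : MvPolynomial (Fin m) ℝ := ∏ i, Pc i with hq
  have hqe : ∀ x, eval x q = ∏ i, lam i x := by
    intro x
    rw [hq, map_prod]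
    exact Finset.prod_congr rfl fun i _ => hPc i x
  have hΔH : Δ ⊆ (H : Set (Fin m → ℝ)) := by
    rw [hΔ, hH]; exact convexHull_subset_affineSpan _
  -- q vanishes on D
  have hq0D : ∀ x ∈ D, eval x q = 0 := by
    intro x hx
    rw [hD] at hx
    obtain ⟨i, hi⟩ := Set.mem_iUnion.mp hx
    rw [hqe]
    exact Finset.prod_eq_zero (Finset.mem_univ i) (hDsub i x hi)
  -- on Δ, vanishing of q forces vanishing of φ
  have hφq : ∀ x ∈ Δ, eval x q = 0 → φ x = 0 := by
    intro x hxΔ hx0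
    have hxH : x ∈ H := hΔH hxΔ
    rw [hH] at hxH
    obtain ⟨w, hw, hxw⟩ := eq_affineCombination_of_mem_affineSpan_of_fintype hxH
    rw [hqe] at hx0
    obtain ⟨i, _, hi⟩ := Finset.prod_eq_zero_iff.mp hx0
    have hwi : w i = 0 := by
      rw [← hlamcomb w hw i, ← hxw]; exact hi
    have hxD : x ∈ D := by
      rw [hD]
      exact Set.mem_iUnion.mpr ⟨i, hxw ▸ hmem w hw i hwi⟩
    exact hφ0 x hxD
  -- compactness facts
  have hΔc : IsCompact Δ := hΔ ▸ (Set.finite_range v).isCompact_convexHull ℝ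
  have hΔne : Δ.Nonempty :=
    ⟨v 0, by rw [hΔ]; exact subset_convexHull ℝ _ (Set.mem_range_self 0)⟩
  have hqcont : Continuous fun x => eval x q := MvPolynomial.continuous_eval q
  have hq2cont : ContinuousOn (fun x => (eval x q) ^ 2) Δ := (hqcont.pow 2).continuousOn
  have hφΔ : ContinuousOn φ Δ := hφ.mono hΔH
  -- bound M on q²
  obtain ⟨x₀, hx₀Δ, hx₀'⟩ := hΔc.exists_isMaxOn hΔne hq2cont
  have hx₀ : ∀ x ∈ Δ, (fun x => (eval x q) ^ 2) x ≤ (fun x => (eval x q) ^ 2) x₀ :=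
    fun x hx => hx₀' hx
  set M : ℝ := (eval x₀ q) ^ 2 with hMdef
  have hM0 : 0 ≤ M := sq_nonneg _
  have hMx : ∀ x ∈ Δ, (eval x q) ^ 2 ≤ M := hx₀
  set c : ℝ := (M + 1)⁻¹ with hcdef
  have hc : 0 < c := by positivity
  have hcM : c * (M + 1) = 1 := by
    rw [hcdef]; field_simp
  have hlt1 : ∀ x ∈ Δ, c * (eval x q) ^ 2 < 1 := by
    intro x hx
    have h1 : (eval x q) ^ 2 < M + 1 := lt_of_le_of_lt (hMx x hx) (lt_add_one M)
    calc c * (eval x q) ^ 2 < c * (M + 1) := by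
          exact mul_lt_mul_of_pos_left h1 hc
    _ = 1 := hcM
  -- bound B on |φ|
  obtain ⟨x₁, hx₁Δ, hx₁'⟩ := hΔc.exists_isMaxOn hΔne hφΔ.abs
  have hx₁ : ∀ x ∈ Δ, |φ x| ≤ |φ x₁| := fun x hx => hx₁' hx
  set B : ℝ := |φ x₁| with hBdef
  have hB0 : 0 ≤ B := abs_nonneg _
  have hB : ∀ x ∈ Δ, |φ x| ≤ B := hx₁
  -- polynomial approximation of φ
  obtain ⟨r, hr⟩ := mv_poly_near hΔc hφΔ (show (0:ℝ) < ε / 4 by positivity)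
  -- the key compactness estimate
  have hδex : ∃ δ > 0, ∀ x ∈ Δ, (eval x q) ^ 2 < δ → |φ x| < ε / 4 := by
    by_cases hK : (Δ ∩ {x | ε / 4 ≤ |φ x|}).Nonempty
    · have hKcl : IsClosed (Δ ∩ {x | ε / 4 ≤ |φ x|}) := by
        have := hφΔ.abs.preimage_isClosed_of_isClosed hΔc.isClosed
          (isClosed_Ici (a := ε / 4))
        exact this
      have hKc : IsCompact (Δ ∩ {x | ε / 4 ≤ |φ x|}) :=
        hΔc.of_isClosed_subset hKcl Set.inter_subset_left
      obtain ⟨x₂, hx₂K, hx₂'⟩ := hKc.exists_isMinOn hK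
        (hq2cont.mono Set.inter_subset_left)
      have hx₂ : ∀ x ∈ Δ ∩ {x | ε / 4 ≤ |φ x|}, (eval x₂ q) ^ 2 ≤ (eval x q) ^ 2 :=
        fun x hx => hx₂' hx
      refine ⟨(eval x₂ q) ^ 2, ?_, ?_⟩
      · have hne : eval x₂ q ≠ 0 := by
          intro h0
          have h1 := hφq x₂ hx₂K.1 h0
          have h2 := hx₂K.2
          rw [Set.mem_setOf_eq, h1, abs_zero] at h2
          linarith
        positivity
      · intro x hx hltx
        by_contra hcon
        push_neg at hcon
        exact absurd (hx₂ x ⟨hx, hcon⟩) (not_le.mpr hltx)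
    · refine ⟨1, one_pos, fun x hx _ => ?_⟩
      by_contra hcon
      push_neg at hcon
      exact hK ⟨x, hx, hcon⟩
  obtain ⟨δ, hδ0, hδ⟩ := hδex
  set t : ℝ := max (1 - c * δ) 0 with htdef
  have ht0 : 0 ≤ t := le_max_right _ _
  have ht1 : t < 1 := by
    apply max_lt _ one_pos
    nlinarith
  -- choose the exponent n
  have hev := (tendsto_pow_atTop_nhds_zero_of_lt_one ht0 ht1).eventually
    (gt_mem_nhds (show (0:ℝ) < ε / (4 * (B + 1)) by positivity))
  obtain ⟨n, hn⟩ := hev.exists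
  have hBtn : B * t ^ n < ε / 4 := by
    have h1 : t ^ n ≥ 0 := pow_nonneg ht0 n
    have h2 : (B + 1) * t ^ n < (B + 1) * (ε / (4 * (B + 1))) := by
      apply mul_lt_mul_of_pos_left hn
      positivity
    have h3 : (B + 1) * (ε / (4 * (B + 1))) = ε / 4 := by
      field_simp
    nlinarith
  -- the approximating polynomial
  refine ⟨r * (1 - (1 - C c * q ^ 2) ^ n), fun x hx => ?_, fun x hxΔ => ?_⟩
  · have h0 := hq0D x hx
    simp [h0]
  · have hevalp : eval x (r * (1 - (1 - C c * q ^ 2) ^ n)) =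
        eval x r * (1 - (1 - c * (eval x q) ^ 2) ^ n) := by
      simp
    rw [hevalp]
    set a : ℝ := eval x q with hadef
    set u : ℝ := 1 - c * a ^ 2 with hudef
    have hca0 : 0 ≤ c * a ^ 2 := mul_nonneg hc.le (sq_nonneg a)
    have hu0 : 0 ≤ u := by
      have := hlt1 x hxΔ
      rw [hudef]; linarith
    have hu1 : u ≤ 1 := by rw [hudef]; linarith
    have hun0 : 0 ≤ u ^ n := pow_nonneg hu0 n
    have hun1 : u ^ n ≤ 1 := pow_le_one₀ hu0 hu1
    have key1 : |φ x| * u ^ n < ε / 4 := by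
      rcases lt_or_ge (a ^ 2) δ with hlo | hhi
      · calc |φ x| * u ^ n ≤ |φ x| * 1 :=
              mul_le_mul_of_nonneg_left hun1 (abs_nonneg _)
        _ = |φ x| := mul_one _
        _ < ε / 4 := hδ x hxΔ hlo
      · have hut : u ≤ t := by
          have h1 : c * δ ≤ c * a ^ 2 := mul_le_mul_of_nonneg_left hhi hc.le
          have h2 : u ≤ 1 - c * δ := by rw [hudef]; linarith
          exact h2.trans (le_max_left _ _)
        have h3 : u ^ n ≤ t ^ n := pow_le_pow_left₀ hu0 hut n
        calc |φ x| * u ^ n ≤ B * t ^ n :=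
              mul_le_mul (hB x hxΔ) h3 hun0 hB0
        _ < ε / 4 := hBtn
    have key2 : |φ x - eval x r| * (1 - u ^ n) < ε / 4 := by
      calc |φ x - eval x r| * (1 - u ^ n) ≤ |φ x - eval x r| * 1 :=
            mul_le_mul_of_nonneg_left (by linarith) (abs_nonneg _)
      _ = |φ x - eval x r| := mul_one _
      _ < ε / 4 := hr x hxΔ
    have hsplit : |φ x - eval x r * (1 - u ^ n)| ≤
        |φ x| * u ^ n + |φ x - eval x r| * (1 - u ^ n) := by
      have h1 : φ x - eval x r * (1 - u ^ n) =
          φ x * u ^ n + (φ x - eval x r) * (1 - u ^ n) := by ring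
      rw [h1]
      calc |φ x * u ^ n + (φ x - eval x r) * (1 - u ^ n)| ≤
            |φ x * u ^ n| + |(φ x - eval x r) * (1 - u ^ n)| := abs_add_le _ _
      _ = |φ x| * u ^ n + |φ x - eval x r| * (1 - u ^ n) := by
            rw [abs_mul, abs_mul, abs_of_nonneg hun0, abs_of_nonneg (by linarith : (0:ℝ) ≤ 1 - u ^ n)]
    linarith
end
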